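/- The polynomial sequence {B_n(y)}_{n≥0} of Bell polynomials is strongly y-log-convex: for all 1 ≤ m ≤ n, the polynomial B_{m-1}(y)·B_{n+1}(y) − B_m(y)·B_n(y) has nonnegative coefficients. -/

import Mathlib

open Polynomial Finset

/-- The Stirling numbers of the second kind. -/
def S : ℕ → ℕ → ℕ
  | 0, 0 => 1
  | 0, _+1 => 0
  | _+1, 0 => 0
  | n+1, k+1 => S n k + (k + 1) * S n (k+1)

/-- The `n`-th Bell polynomial `B_n(y) = ∑_{k=0}^n S(n,k) y^k`. -/
noncomputable def B (n : ℕ) : Polynomial ℤ :=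
  ∑ k ∈ Finset.range (n + 1), C (S n k : ℤ) * X ^ k


lemma S_eq_zero : ∀ {n k : ℕ}, n < k → S n k = 0
  | 0, 0, h => absurd h (by omega)
  | 0, _+1, _ => rfl
  | n+1, 0, h => absurd h (by omega)
  | n+1, k+1, h => by
      show S n k + (k + 1) * S n (k+1) = 0
      rw [S_eq_zero (by omega), S_eq_zero (by omega)]
      ring

lemma S_pos : ∀ (n k : ℕ), 1 ≤ k → k ≤ n → 0 < S n k
  | 0, k, h1, h2 => by omega
  | n+1, k+1, h1, h2 => by
      show 0 < S n k + (k + 1) * S n (k+1)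
      rcases Nat.eq_zero_or_pos k with rfl | hk
      · rcases Nat.eq_zero_or_pos n with rfl | hn
        · simp [S]
        · have := S_pos n 1 le_rfl hn
          simpa using this.trans_le (Nat.le_add_left _ _)
      · have := S_pos n k hk (by omega)
        omega

/-- Adjacent log-concavity of row `a+1`, given strong log-concavity of row `a`. -/
lemma row_adj (a : ℕ)
    (hstrong : ∀ k l, k ≤ l → S a (l+1) * S a k ≤ S a (k+1) * S a l) :
    ∀ k, S (a+1) (k+2) * S (a+1) k ≤ S (a+1) (k+1) * S (a+1) (k+1) := by
  intro k
  cases k with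
  | zero =>
      show S (a+1) 2 * 0 ≤ _
      simp
  | succ j =>
      show (S a (j+2) + (j+3) * S a (j+3)) * (S a j + (j+1) * S a (j+1)) ≤
        (S a (j+1) + (j+2) * S a (j+2)) * (S a (j+1) + (j+2) * S a (j+2))
      have h1 : S a (j+2) * S a j ≤ S a (j+1) * S a (j+1) := hstrong j (j+1) (by omega)
      have h2 : S a (j+3) * S a j ≤ S a (j+1) * S a (j+2) := hstrong j (j+2) (by omega)
      have h3 : S a (j+3) * S a (j+1) ≤ S a (j+2) * S a (j+2) := hstrong (j+1) (j+2) (by omega)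
      calc (S a (j+2) + (j+3) * S a (j+3)) * (S a j + (j+1) * S a (j+1))
          = S a (j+2) * S a j + (j+1) * (S a (j+2) * S a (j+1))
            + (j+3) * (S a (j+3) * S a j)
            + ((j+3)*(j+1)) * (S a (j+3) * S a (j+1)) := by ring
        _ ≤ S a (j+1) * S a (j+1) + (j+1) * (S a (j+2) * S a (j+1))
            + (j+3) * (S a (j+1) * S a (j+2))
            + ((j+3)*(j+1)) * (S a (j+2) * S a (j+2)) :=
            Nat.add_le_add (Nat.add_le_add (Nat.add_le_add h1 le_rfl)
              (Nat.mul_le_mul_left _ h2)) (Nat.mul_le_mul_left _ h3)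
        _ ≤ (S a (j+1) + (j+2) * S a (j+2)) * (S a (j+1) + (j+2) * S a (j+2)) := by
            have hexp : (S a (j+1) + (j+2) * S a (j+2)) * (S a (j+1) + (j+2) * S a (j+2))
                = S a (j+1) * S a (j+1) + (j+1) * (S a (j+2) * S a (j+1))
                  + (j+3) * (S a (j+1) * S a (j+2))
                  + ((j+3)*(j+1)) * (S a (j+2) * S a (j+2))
                  + S a (j+2) * S a (j+2) := by ring
            rw [hexp]
            exact Nat.le_add_right _ _

/-- Strong row log-concavity from adjacent log-concavity. -/
lemma row_strong_of_adj (a : ℕ)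
    (hadj : ∀ k, S a (k+2) * S a k ≤ S a (k+1) * S a (k+1)) :
    ∀ k l, k ≤ l → S a (l+1) * S a k ≤ S a (k+1) * S a l := by
  intro k l hkl
  obtain ⟨d, rfl⟩ := Nat.exists_eq_add_of_le hkl
  clear hkl
  induction d with
  | zero => simp [Nat.mul_comm]
  | succ e ih =>
      have harr : k + (e+1) = (k + e) + 1 := by omega
      rw [harr]
      rcases Nat.eq_zero_or_pos (S a (k + e + 1)) with hz | hp
      · have hgt : a < k + e + 1 := by
          by_contra hle
          push_neg at hle
          have := S_pos a (k+e+1) (by omega) hle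
          omega
        rw [S_eq_zero (show a < k + e + 1 + 1 by omega)]
        simp
      · have ih' : S a (k + e + 1) * S a k ≤ S a (k+1) * S a (k+e) := by
          have := ih
          rwa [show k + e + 1 = k + e + 1 from rfl] at this
        have hadj' := hadj (k + e)
        -- (S a (k+e+2) * S a k) * S a (k+e+1) ≤ (S a (k+1) * S a (k+e+1)) * S a (k+e+1)
        have hmul : (S a (k + e + 1 + 1) * S a k) * S a (k + e + 1) ≤
            (S a (k+1) * S a (k + e + 1)) * S a (k + e + 1) := by
          calc (S a (k + e + 1 + 1) * S a k) * S a (k + e + 1)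
              = S a (k + e + 1 + 1) * (S a (k + e + 1) * S a k) := by ring
            _ ≤ S a (k + e + 1 + 1) * (S a (k+1) * S a (k+e)) :=
                Nat.mul_le_mul_left _ ih'
            _ = S a (k+1) * (S a (k + e + 2) * S a (k+e)) := by ring_nf
            _ ≤ S a (k+1) * (S a (k + e + 1) * S a (k + e + 1)) :=
                Nat.mul_le_mul_left _ (hadj (k+e))
            _ = (S a (k+1) * S a (k + e + 1)) * S a (k + e + 1) := by ring
        exact Nat.le_of_mul_le_mul_right hmul hp

lemma row_strong : ∀ a k l, k ≤ l → S a (l+1) * S a k ≤ S a (k+1) * S a l := by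
  intro a
  induction a with
  | zero =>
      intro k l hkl
      rw [show S 0 (l+1) = 0 from rfl]
      simp
  | succ b ih => exact row_strong_of_adj (b+1) (row_adj b ih)

/-- Cross lemma: from TP2 of rows (a,b) and strong log-concavity of row a. -/
lemma cross (a b : ℕ)
    (h2 : ∀ k l, k ≤ l → S a l * S b k ≤ S a k * S b l) :
    ∀ k l, k ≤ l → S a (l+1) * S b k ≤ S a (k+1) * S b l := by
  intro k l hkl
  rcases eq_or_lt_of_le hkl with rfl | hlt
  · exact le_of_eq (Nat.mul_comm _ _ ▸ rfl)
  · rcases Nat.eq_zero_or_pos (S a (k+1)) with hz | hp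
    · have hgt : a < k + 1 := by
        by_contra hle
        push_neg at hle
        have := S_pos a (k+1) (by omega) hle
        omega
      rw [S_eq_zero (show a < l + 1 by omega)]
      simp
    · have step1 : S a (l+1) * S b k * S a (k+1) ≤ S a (k+1) * S b l * S a (k+1) := by
        calc S a (l+1) * S b k * S a (k+1)
            = S a (l+1) * (S a (k+1) * S b k) := by ring
          _ ≤ S a (l+1) * (S a k * S b (k+1)) :=
              Nat.mul_le_mul_left _ (h2 k (k+1) (by omega))
          _ = (S a (l+1) * S a k) * S b (k+1) := by ring
          _ ≤ (S a (k+1) * S a l) * S b (k+1) :=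
              Nat.mul_le_mul_right _ (row_strong a k l hkl)
          _ = (S a l * S b (k+1)) * S a (k+1) := by ring
          _ ≤ (S a (k+1) * S b l) * S a (k+1) :=
              Nat.mul_le_mul_right _ (h2 (k+1) l hlt)
      exact Nat.le_of_mul_le_mul_right step1 hp

/-- TP2 of the Stirling triangle. -/
lemma stirling_TP2 : ∀ (a d k l : ℕ), k ≤ l → S a l * S (a+d) k ≤ S a k * S (a+d) l := by
  intro a d
  induction d with
  | zero => intro k l _; simp [Nat.mul_comm]
  | succ e ih =>
      intro k l hkl
      have hb : a + (e+1) = (a+e) + 1 := by omega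
      rw [hb]
      cases l with
      | zero =>
          have hk : k = 0 := by omega
          subst hk; exact le_rfl
      | succ l' =>
          cases k with
          | zero =>
              rw [show S (a+e+1) 0 = 0 from rfl]
              simp
          | succ k' =>
              have hk'l' : k' ≤ l' := by omega
              show S a (l'+1) * (S (a+e) k' + (k'+1) * S (a+e) (k'+1)) ≤
                S a (k'+1) * (S (a+e) l' + (l'+1) * S (a+e) (l'+1))
              have p1 : S a (l'+1) * S (a+e) k' ≤ S a (k'+1) * S (a+e) l' :=
                cross a (a+e) (fun k l h => ih k l h) k' l' hk'l'
              have p2 : S a (l'+1) * ((k'+1) * S (a+e) (k'+1)) ≤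
                  S a (k'+1) * ((l'+1) * S (a+e) (l'+1)) := by
                calc S a (l'+1) * ((k'+1) * S (a+e) (k'+1))
                    = (k'+1) * (S a (l'+1) * S (a+e) (k'+1)) := by ring
                  _ ≤ (l'+1) * (S a (k'+1) * S (a+e) (l'+1)) :=
                      Nat.mul_le_mul (by omega) (ih (k'+1) (l'+1) (by omega))
                  _ = S a (k'+1) * ((l'+1) * S (a+e) (l'+1)) := by ring
              calc S a (l'+1) * (S (a+e) k' + (k'+1) * S (a+e) (k'+1))
                  = S a (l'+1) * S (a+e) k' + S a (l'+1) * ((k'+1) * S (a+e) (k'+1)) := by ring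
                _ ≤ S a (k'+1) * S (a+e) l' + S a (k'+1) * ((l'+1) * S (a+e) (l'+1)) :=
                    Nat.add_le_add p1 p2
                _ = S a (k'+1) * (S (a+e) l' + (l'+1) * S (a+e) (l'+1)) := by ring

lemma stirling_TP2' (a b k l : ℕ) (hab : a ≤ b) (hkl : k ≤ l) :
    S a l * S b k ≤ S a k * S b l := by
  obtain ⟨d, rfl⟩ := Nat.exists_eq_add_of_le hab
  exact stirling_TP2 a d k l hkl

lemma coeff_B (n k : ℕ) : (B n).coeff k = (S n k : ℤ) := by
  rw [B, Polynomial.finset_sum_coeff]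
  simp only [Polynomial.coeff_C_mul, Polynomial.coeff_X_pow, mul_ite, mul_one, mul_zero]
  rw [Finset.sum_ite_eq (Finset.range (n+1)) k (fun j => (S n j : ℤ))]
  by_cases h : k ∈ Finset.range (n+1)
  · simp [h]
  · simp only [h, if_false]
    rw [S_eq_zero (by simpa using h : n < k)]
    simp

lemma coeff_XD (n k : ℕ) : (X * Polynomial.derivative (B n)).coeff k = (k : ℤ) * S n k := by
  cases k with
  | zero => simp
  | succ j =>
      rw [Polynomial.coeff_X_mul, Polynomial.coeff_derivative, coeff_B]
      push_cast
      ring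

lemma B_succ (n : ℕ) : B (n+1) = X * B n + X * Polynomial.derivative (B n) := by
  ext i
  rw [Polynomial.coeff_add, coeff_XD, coeff_B]
  cases i with
  | zero => simp [show S (n+1) 0 = 0 from rfl]
  | succ j =>
      rw [Polynomial.coeff_X_mul, coeff_B]
      rw [show S (n+1) (j+1) = S n j + (j+1) * S n (j+1) from rfl]
      push_cast
      ring

/-- The Bell polynomials are strongly `y`-log-convex: for `1 ≤ m ≤ n`, the polynomial
`B_{m-1}(y)·B_{n+1}(y) − B_m(y)·B_n(y)` has nonnegative coefficients. -/
theorem bell_strongly_log_convex (m n : ℕ) (hm : 1 ≤ m) (hmn : m ≤ n) (i : ℕ) :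
    0 ≤ (B (m - 1) * B (n + 1) - B m * B n).coeff i := by
  obtain ⟨a, rfl⟩ : ∃ a, m = a + 1 := ⟨m - 1, by omega⟩
  have han : a ≤ n := by omega
  rw [show a + 1 - 1 = a from rfl]
  have hD : B a * B (n+1) - B (a+1) * B n
      = B a * (X * Polynomial.derivative (B n)) - (X * Polynomial.derivative (B a)) * B n := by
    rw [B_succ n, B_succ a]; ring
  rw [hD, Polynomial.coeff_sub, Polynomial.coeff_mul, Polynomial.coeff_mul,
    ← Finset.sum_sub_distrib]
  have hterm : ∀ p ∈ Finset.HasAntidiagonal.antidiagonal i,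
      (B a).coeff p.1 * (X * Polynomial.derivative (B n)).coeff p.2
        - (X * Polynomial.derivative (B a)).coeff p.1 * (B n).coeff p.2
      = ((p.2 : ℤ) - p.1) * ((S a p.1 : ℤ) * S n p.2) := by
    intro p _
    rw [coeff_B, coeff_B, coeff_XD, coeff_XD]
    ring
  rw [Finset.sum_congr rfl hterm]
  set f : ℕ × ℕ → ℤ := fun p => ((p.2 : ℤ) - p.1) * ((S a p.1 : ℤ) * S n p.2) with hf
  have hswap : ∑ p ∈ Finset.HasAntidiagonal.antidiagonal i, f p
      = ∑ p ∈ Finset.HasAntidiagonal.antidiagonal i, f p.swap := by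
    conv_lhs => rw [← Finset.HasAntidiagonal.map_swap_antidiagonal]
    rw [Finset.sum_map]
    rfl
  have hpair : ∀ p : ℕ × ℕ, 0 ≤ f p + f p.swap := by
    intro ⟨k, l⟩
    simp only [hf, Prod.swap]
    have key : f (k, l) + f (l, k) = ((l : ℤ) - k) * ((S a k : ℤ) * S n l - (S a l : ℤ) * S n k) := by
      simp only [hf]; ring
    rw [show (⟨k,l⟩ : ℕ × ℕ) = (k,l) from rfl] at *
    calc (0:ℤ) ≤ ((l : ℤ) - k) * ((S a k : ℤ) * S n l - (S a l : ℤ) * S n k) := by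
          rcases le_total k l with h | h
          · have := stirling_TP2' a n k l han h
            have h2 : (S a l : ℤ) * S n k ≤ (S a k : ℤ) * S n l := by exact_mod_cast this
            apply mul_nonneg (by omega) (by linarith)
          · have := stirling_TP2' a n l k han h
            have h2 : (S a k : ℤ) * S n l ≤ (S a l : ℤ) * S n k := by exact_mod_cast this
            apply mul_nonneg_of_nonpos_of_nonpos (by omega) (by linarith)
      _ = f (k, l) + f (l, k) := key.symm
  have h2T : 0 ≤ (∑ p ∈ Finset.HasAntidiagonal.antidiagonal i, f p) + (∑ p ∈ Finset.HasAntidiagonal.antidiagonal i, f p) := by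
    nth_rewrite 2 [hswap]
    rw [← Finset.sum_add_distrib]
    exact Finset.sum_nonneg fun p _ => hpair p
  linarith
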